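/- Let 0 < α < 1 and suppose y is absolutely continuous on (0,∞) and satisfies ^{ABC}D^α_{0+} y(t) = F(t) with F continuous. Then y satisfies the fractional integral equation y(t) = y(0⁺) + ((1−α)/B(α)) F(t) + (α/B(α)) J^α_{0+} F(t), where J^α_{0+} F(t) = (1/Γ(α)) ∫_0^t (t−τ)^{α−1} F(τ) dτ is the Riemann–Liouville integral of order α, provided F(0⁺) = 0. -/

import Mathlib

open MeasureTheory

/-- Real one-parameter Mittag-Leffler function `E_α(z) = Σ_k z^k/Γ(αk+1)`. -/
noncomputable def mlR (α z : ℝ) : ℝ := ∑' k : ℕ, z ^ k / Real.Gamma (α * k + 1)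

/-- Atangana–Baleanu (Caputo sense) operator with base point `0`. -/
noncomputable def ABCop (B α : ℝ) (y' : ℝ → ℝ) (t : ℝ) : ℝ :=
  (B / (1 - α)) * ∫ τ in (0 : ℝ)..t, mlR α (-(α / (1 - α)) * (t - τ) ^ α) * y' τ

/-- Riemann–Liouville fractional integral `J^σ_{0+} F(t) = (1/Γ(σ)) ∫_0^t (t−τ)^{σ−1} F(τ) dτ`. -/
noncomputable def RLr (σ : ℝ) (F : ℝ → ℝ) (t : ℝ) : ℝ :=
  (Real.Gamma σ)⁻¹ * ∫ τ in (0 : ℝ)..t, (t - τ) ^ (σ - 1) * F τ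

section Aux

open Filter Topology

variable {α : ℝ}

lemma ABCaux.gamma_conv (hα : 0 < α) (hα1 : α < 1) {x : ℝ} (hx : 0 < x) :
    x * Real.Gamma x ≤ Real.Gamma (x + α) * (x + α) ^ (1 - α) := by
  have hxα : 0 < x + α := by linarith
  have hg2 : 0 < Real.Gamma (x + α) := Real.Gamma_pos_of_pos hxα
  have h1 : Real.Gamma (x + 1) ≤ Real.Gamma (x + α) ^ α * Real.Gamma (x + α + 1) ^ (1 - α) := by
    have := Real.convexOn_log_Gamma.2 (Set.mem_Ioi.mpr hxα)
      (Set.mem_Ioi.mpr (by linarith : (0:ℝ) < x + α + 1)) hα.le (by linarith : (0:ℝ) ≤ 1 - α)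
      (by ring)
    have hc : α • (x + α) + (1 - α) • (x + α + 1) = x + 1 := by simp [smul_eq_mul]; ring
    rw [hc] at this
    simp only [Function.comp, smul_eq_mul] at this
    have hg1 : 0 < Real.Gamma (x + 1) := Real.Gamma_pos_of_pos (by linarith)
    have hg3 : 0 < Real.Gamma (x + α + 1) := Real.Gamma_pos_of_pos (by linarith)
    calc Real.Gamma (x + 1) = Real.exp (Real.log (Real.Gamma (x+1))) := (Real.exp_log hg1).symm
      _ ≤ Real.exp (α * Real.log (Real.Gamma (x+α)) + (1-α) * Real.log (Real.Gamma (x+α+1))) :=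
          Real.exp_le_exp.mpr this
      _ = Real.Gamma (x + α) ^ α * Real.Gamma (x + α + 1) ^ (1 - α) := by
          rw [Real.exp_add, Real.rpow_def_of_pos hg2, Real.rpow_def_of_pos hg3,
            mul_comm (Real.log _), mul_comm (Real.log _)]
  rw [Real.Gamma_add_one (by positivity), Real.Gamma_add_one (by positivity)] at h1
  calc x * Real.Gamma x ≤ Real.Gamma (x+α) ^ α * ((x+α) * Real.Gamma (x+α)) ^ (1-α) := h1
    _ = Real.Gamma (x + α) * (x + α) ^ (1 - α) := by
        rw [Real.mul_rpow hxα.le hg2.le, ← mul_assoc, mul_comm (Real.Gamma (x+α) ^ α),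
          mul_assoc, ← Real.rpow_add hg2]
        norm_num; ring

lemma ABCaux.summable_ml (hα : 0 < α) (hα1 : α < 1) (w : ℝ) :
    Summable (fun k : ℕ => w ^ k / Real.Gamma (α * k + 1)) := by
  apply summable_of_ratio_norm_eventually_le (r := 1/2) (by norm_num)
  have htend : Tendsto (fun k : ℕ => (α * k + 1 : ℝ) ^ (-α)) atTop (𝓝 0) := by
    apply (tendsto_rpow_neg_atTop hα).comp
    exact tendsto_atTop_add_const_right _ 1
      (Tendsto.const_mul_atTop hα tendsto_natCast_atTop_atTop)
  filter_upwards [htend.eventually_le_const (show (0:ℝ) < 1/(4*|w|+1) by positivity)]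
    with k hk
  set x : ℝ := α * k + 1 with hxdef
  have hx1 : (1:ℝ) ≤ x := by
    have : (0:ℝ) ≤ α * k := by positivity
    simp [hxdef]; linarith
  have hx0 : (0:ℝ) < x := by linarith
  have hxα : (0:ℝ) < x + α := by linarith
  have hg : 0 < Real.Gamma x := Real.Gamma_pos_of_pos hx0
  have hgα : 0 < Real.Gamma (x + α) := Real.Gamma_pos_of_pos hxα
  have hxrw : α * (k+1 : ℕ) + 1 = x + α := by push_cast [hxdef]; ring
  have hp : (0:ℝ) < (x + α) ^ (1 - α) := Real.rpow_pos_of_pos hxα _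
  have key : 2 * |w| * (x + α) ^ (1 - α) ≤ x := by
    have h1 : (x + α) ^ (1 - α) ≤ 2 * x ^ (1 - α) := by
      calc (x + α) ^ (1 - α) ≤ (2 * x) ^ (1 - α) :=
            Real.rpow_le_rpow hxα.le (by linarith) (by linarith)
        _ = 2 ^ (1 - α) * x ^ (1 - α) := Real.mul_rpow (by norm_num) hx0.le
        _ ≤ 2 * x ^ (1 - α) := by
            have h2a : (2:ℝ) ^ (1 - α) ≤ 2 ^ (1:ℝ) :=
              Real.rpow_le_rpow_of_exponent_le (by norm_num) (by linarith)
            simp only [Real.rpow_one] at h2a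
            have := Real.rpow_nonneg hx0.le (1 - α)
            nlinarith
    have h2 : x ^ (1 - α) = x * x ^ (-α) := by
      rw [← Real.rpow_one_add' (by linarith) (by intro h; linarith)]
      ring_nf
    have h3 : (4 * |w| + 1) * x ^ (-α) ≤ 1 := by
      rw [mul_comm, ← le_div_iff₀ (by positivity)]
      exact hk
    have hxneg : 0 ≤ x ^ (-α) := Real.rpow_nonneg hx0.le _
    calc 2 * |w| * (x + α) ^ (1 - α) ≤ 2 * |w| * (2 * x ^ (1 - α)) := by
          have : (0:ℝ) ≤ 2 * |w| := by positivity
          nlinarith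
      _ = (4 * |w|) * (x * x ^ (-α)) := by rw [h2]; ring
      _ ≤ (4 * |w| + 1) * x ^ (-α) * x := by nlinarith
      _ ≤ 1 * x := by nlinarith
      _ = x := one_mul x
  have hgr : |w| * Real.Gamma x ≤ (1/2) * Real.Gamma (x + α) := by
    have hc := ABCaux.gamma_conv hα hα1 hx0
    have h4 : (2 * |w| * Real.Gamma x) * (x + α) ^ (1 - α) ≤
        Real.Gamma (x + α) * (x + α) ^ (1 - α) := by nlinarith
    have := (mul_le_mul_iff_of_pos_right hp).mp h4
    linarith
  have hnorm : ∀ m : ℕ, ‖w ^ m / Real.Gamma (α * m + 1)‖ = |w| ^ m / Real.Gamma (α * m + 1) := by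
    intro m
    rw [norm_div, Real.norm_eq_abs, Real.norm_eq_abs, abs_pow,
      abs_of_pos (Real.Gamma_pos_of_pos (by positivity))]
  rw [hnorm, hnorm, hxrw, ← mul_div_assoc, div_le_div_iff₀ hgα hg]
  have hwk : (0:ℝ) ≤ |w| ^ k := by positivity
  calc |w| ^ (k+1) * Real.Gamma x = |w|^k * (|w| * Real.Gamma x) := by ring
    _ ≤ |w|^k * ((1/2) * Real.Gamma (x+α)) := by nlinarith
    _ = 1/2 * |w|^k * Real.Gamma (x+α) := by ring

lemma ABCaux.beta_real {a b : ℝ} (ha : 0 < a) (hb : 0 < b) :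
    ∫ x in (0:ℝ)..1, x ^ (a-1) * (1-x) ^ (b-1)
      = Real.Gamma a * Real.Gamma b / Real.Gamma (a+b) := by
  have h := Complex.Gamma_mul_Gamma_eq_betaIntegral
    (show 0 < (a:ℂ).re by simpa using ha) (show 0 < (b:ℂ).re by simpa using hb)
  have hβ : Complex.betaIntegral a b = ((∫ x in (0:ℝ)..1, x ^ (a-1) * (1-x) ^ (b-1) : ℝ) : ℂ) := by
    rw [Complex.betaIntegral, ← intervalIntegral.integral_ofReal]
    refine intervalIntegral.integral_congr fun x hx => ?_
    rw [Set.uIcc_of_le (by norm_num : (0:ℝ) ≤ 1)] at hx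
    obtain ⟨hx0, hx1⟩ := hx
    push_cast
    rw [Complex.ofReal_cpow hx0, Complex.ofReal_cpow (show (0:ℝ) ≤ 1 - x by linarith)]
    norm_cast
  rw [hβ] at h
  rw [Complex.Gamma_ofReal, Complex.Gamma_ofReal,
    show ((a:ℂ) + b) = ((a+b : ℝ) : ℂ) by push_cast; ring, Complex.Gamma_ofReal] at h
  have hCab : ((Real.Gamma (a+b) : ℝ) : ℂ) ≠ 0 := by
    exact_mod_cast (Real.Gamma_pos_of_pos (by linarith : (0:ℝ) < a + b)).ne'
  apply Complex.ofReal_inj.mp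
  push_cast
  rw [eq_div_iff hCab]
  linear_combination -h

lemma ABCaux.beta_scaled {a b T : ℝ} (ha : 0 < a) (hb : 0 < b) (hT : 0 < T) :
    ∫ s in (0:ℝ)..T, (T-s) ^ (a-1) * s ^ (b-1)
      = Real.Gamma a * Real.Gamma b / Real.Gamma (a+b) * T ^ (a+b-1) := by
  have h1 : ∫ x in (0:ℝ)..1, (T - T*x) ^ (a-1) * (T*x) ^ (b-1)
      = T⁻¹ • ∫ s in (0:ℝ)..T, (T-s) ^ (a-1) * s ^ (b-1) := by
    have := intervalIntegral.integral_comp_mul_left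
      (a := (0:ℝ)) (b := (1:ℝ)) (fun s => (T-s) ^ (a-1) * s ^ (b-1)) hT.ne'
    simpa using this
  have h2 : ∫ x in (0:ℝ)..1, (T - T*x) ^ (a-1) * (T*x) ^ (b-1)
      = T ^ (a-1) * T ^ (b-1) * ∫ x in (0:ℝ)..1, x ^ (b-1) * (1-x) ^ (a-1) := by
    rw [← intervalIntegral.integral_const_mul]
    refine intervalIntegral.integral_congr fun x hx => ?_
    rw [Set.uIcc_of_le (by norm_num : (0:ℝ) ≤ 1)] at hx
    obtain ⟨hx0, hx1⟩ := hx
    have e1 : T - T * x = T * (1 - x) := by ring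
    rw [e1, Real.mul_rpow hT.le (by linarith), Real.mul_rpow hT.le hx0]
    ring
  rw [h2, ABCaux.beta_real hb ha] at h1
  have h3 := congrArg (fun z => T * z) h1
  simp only [smul_eq_mul, ← mul_assoc, mul_inv_cancel₀ hT.ne', one_mul] at h3
  rw [← h3, mul_comm (Real.Gamma b), add_comm b a]
  rw [show a + b - 1 = 1 + (a-1) + (b-1) by ring, Real.rpow_add hT, Real.rpow_add hT,
    Real.rpow_one]
  ring

lemma ABCaux.mlR_continuous (hα : 0 < α) (hα1 : α < 1) : Continuous (mlR α) := by
  rw [continuous_iff_continuousAt]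
  intro z
  have hR : |z| < |z| + 1 := by linarith
  have hcont : ContinuousOn (mlR α) (Set.Icc (-(|z|+1)) (|z|+1)) := by
    unfold mlR
    apply continuousOn_tsum (f := fun (k : ℕ) (x : ℝ) => x ^ k / Real.Gamma (α * k + 1))
      (u := fun k : ℕ => (|z|+1) ^ k / Real.Gamma (α * k + 1))
    · intro k
      exact (continuousOn_pow k).div_const _
    · exact ABCaux.summable_ml hα hα1 _
    · intro k x hx
      rw [Set.mem_Icc] at hx
      have hxa : |x| ≤ |z| + 1 := abs_le.mpr hx
      have hg : 0 < Real.Gamma (α * k + 1) := Real.Gamma_pos_of_pos (by positivity)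
      rw [norm_div, Real.norm_eq_abs, Real.norm_eq_abs, abs_of_pos hg, abs_pow]
      gcongr
  have h1 := neg_abs_le z
  have h2 := le_abs_self z
  exact hcont.continuousAt (Icc_mem_nhds (by linarith) (by linarith))

lemma ABCaux.mlR_abs_le (hα : 0 < α) (hα1 : α < 1) (z : ℝ) : |mlR α z| ≤ mlR α |z| := by
  have h := norm_tsum_le_tsum_norm (f := fun k : ℕ => z ^ k / Real.Gamma (α * k + 1)) ?_
  · refine le_trans h (le_of_eq (tsum_congr fun k => ?_))
    have hg : 0 < Real.Gamma (α * k + 1) := Real.Gamma_pos_of_pos (by positivity)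
    rw [norm_div, Real.norm_eq_abs, Real.norm_eq_abs, abs_of_pos hg, abs_pow]
  · have := (ABCaux.summable_ml hα hα1 |z|)
    refine this.congr fun k => ?_
    have hg : 0 < Real.Gamma (α * k + 1) := Real.Gamma_pos_of_pos (by positivity)
    rw [norm_div, Real.norm_eq_abs, Real.norm_eq_abs, abs_of_pos hg, abs_pow]

lemma ABCaux.mlR_mono (hα : 0 < α) (hα1 : α < 1) {z w : ℝ} (hz : 0 ≤ z) (hzw : z ≤ w) :
    mlR α z ≤ mlR α w := by
  refine Summable.tsum_le_tsum (fun k => ?_) (ABCaux.summable_ml hα hα1 z) (ABCaux.summable_ml hα hα1 w)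
  have hg : 0 < Real.Gamma (α * k + 1) := Real.Gamma_pos_of_pos (by positivity)
  gcongr

lemma ABCaux.mlR_zero (hα : 0 < α) (hα1 : α < 1) : mlR α 0 = 1 := by
  rw [mlR]
  rw [Summable.tsum_eq_zero_add (ABCaux.summable_ml hα hα1 0)]
  simp

lemma ABCaux.base_intable (hα : 0 < α) (hα1 : α < 1) {T c : ℝ} (hT : 0 < T) (hc : 0 ≤ c) :
    IntegrableOn (fun s => (T - s) ^ (α - 1) * s ^ c) (Set.Ioc 0 T) volume := by
  have h0 : IntervalIntegrable (fun x : ℝ => x ^ (α - 1)) volume 0 T :=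
    intervalIntegral.intervalIntegrable_rpow' (by linarith)
  have h1 : IntervalIntegrable (fun s => (T - s) ^ (α - 1)) volume 0 T := by
    exact (by simpa using h0.comp_sub_left T : IntervalIntegrable _ volume T 0).symm
  have h2 : IntervalIntegrable (fun s => (T - s) ^ (α - 1) * s ^ c) volume 0 T :=
    h1.mul_continuousOn (Real.continuous_rpow_const hc).continuousOn
  exact (intervalIntegrable_iff_integrableOn_Ioc_of_le hT.le).mp h2

lemma ABCaux.base_value (hα : 0 < α) (hα1 : α < 1) {T c : ℝ} (hT : 0 < T) (hc : 0 ≤ c) :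
    ∫ s in Set.Ioc (0:ℝ) T, (T - s) ^ (α - 1) * s ^ c
      = Real.Gamma α * Real.Gamma (c+1) / Real.Gamma (α+c+1) * T ^ (α+c) := by
  have := ABCaux.beta_scaled hα (by linarith : (0:ℝ) < c + 1) hT
  rw [intervalIntegral.integral_of_le hT.le] at this
  simpa [add_sub_cancel_right, show α + (c+1) - 1 = α + c by ring,
    show α + (c+1) = α + c + 1 by ring] using this

lemma ABCaux.ml_int (hα : 0 < α) (hα1 : α < 1) {lam T : ℝ} (hlam : 0 < lam) (hT : 0 < T) :
    ∫ s in (0:ℝ)..T, (T - s) ^ (α - 1) * mlR α (-lam * s ^ α)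
      = Real.Gamma α / lam * (1 - mlR α (-lam * T ^ α)) := by
  set μ := volume.restrict (Set.Ioc (0:ℝ) T) with hμ
  set F : ℕ → ℝ → ℝ :=
    fun k s => ((-lam) ^ k / Real.Gamma (α * k + 1)) * ((T - s) ^ (α - 1) * s ^ (α * k)) with hF
  have hαk : ∀ k : ℕ, (0:ℝ) ≤ α * k := fun k => by positivity
  have hγ : ∀ k : ℕ, (0:ℝ) < Real.Gamma (α * k + 1) :=
    fun k => Real.Gamma_pos_of_pos (by have := hαk k; linarith)
  have hFint : ∀ k, Integrable (F k) μ :=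
    fun k => ((ABCaux.base_intable hα hα1 hT (hαk k)).const_mul _)
  have hval : ∀ k : ℕ, ∫ s, F k s ∂μ
      = Real.Gamma α * ((-lam) ^ k * T ^ (α * (k+1))) / Real.Gamma (α * (k+1) + 1) := by
    intro k
    rw [hμ, MeasureTheory.integral_const_mul]
    rw [show ∫ s in Set.Ioc (0:ℝ) T, ((T - s) ^ (α - 1) * s ^ (α * k)) =
        Real.Gamma α * Real.Gamma (α * k + 1) / Real.Gamma (α + α * k + 1) * T ^ (α + α * k) from
        ABCaux.base_value hα hα1 hT (hαk k)]
    rw [show α + α * k = α * (k+1) by ring]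
    field_simp
  have hnorm : ∀ k : ℕ, ∫ s, ‖F k s‖ ∂μ
      = Real.Gamma α * (lam ^ k * T ^ (α * (k+1))) / Real.Gamma (α * (k+1) + 1) := by
    intro k
    have hcongr : ∀ s ∈ Set.Ioc (0:ℝ) T,
        ‖F k s‖ = (lam ^ k / Real.Gamma (α * k + 1)) * ((T - s) ^ (α - 1) * s ^ (α * k)) := by
      intro s hs
      obtain ⟨hs0, hsT⟩ := hs
      have h1 : (0:ℝ) ≤ (T - s) ^ (α - 1) := Real.rpow_nonneg (by linarith) _
      have h2 : (0:ℝ) ≤ s ^ (α * k) := Real.rpow_nonneg hs0.le _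
      rw [hF]
      simp only [Real.norm_eq_abs, abs_mul, abs_div, abs_pow, abs_neg,
        abs_of_pos hlam, abs_of_pos (hγ k), abs_of_nonneg h1, abs_of_nonneg h2]
    rw [hμ, setIntegral_congr_fun measurableSet_Ioc hcongr, MeasureTheory.integral_const_mul,
      show ∫ s in Set.Ioc (0:ℝ) T, ((T - s) ^ (α - 1) * s ^ (α * k)) =
        Real.Gamma α * Real.Gamma (α * k + 1) / Real.Gamma (α + α * k + 1) * T ^ (α + α * k) from
        ABCaux.base_value hα hα1 hT (hαk k),
      show α + α * k = α * (k+1) by ring]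
    field_simp
  have e1 : ∀ k : ℕ, (lam * T ^ α) ^ (k+1) = lam ^ (k+1) * T ^ (α * (k+1)) := by
    intro k
    rw [mul_pow, ← Real.rpow_natCast (T ^ α) (k+1), ← Real.rpow_mul hT.le]
    push_cast; ring_nf
  have hs1 : Summable (fun k : ℕ => (lam * T ^ α) ^ (k+1) / Real.Gamma (α * (k+1) + 1)) := by
    have h2 := (summable_nat_add_iff
      (f := fun k : ℕ => (lam * T ^ α) ^ k / Real.Gamma (α * k + 1)) 1).mpr
      (ABCaux.summable_ml hα hα1 (lam * T ^ α))
    exact h2.congr fun k => by push_cast; ring_nf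
  have hsum : Summable fun k : ℕ => ∫ s, ‖F k s‖ ∂μ := by
    rw [show (fun k : ℕ => ∫ s, ‖F k s‖ ∂μ) = fun k : ℕ =>
        Real.Gamma α / lam * ((lam * T ^ α) ^ (k+1) / Real.Gamma (α * (k+1) + 1)) from ?_]
    · exact hs1.mul_left _
    · funext k
      rw [hnorm k, e1 k]
      have := (hγ (k+1))
      push_cast at this ⊢
      field_simp
      ring
  have hswap := MeasureTheory.integral_tsum_of_summable_integral_norm hFint hsum
  have hpt : ∀ s ∈ Set.Ioc (0:ℝ) T,
      (T - s) ^ (α - 1) * mlR α (-lam * s ^ α) = ∑' k, F k s := by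
    intro s hs
    obtain ⟨hs0, hsT⟩ := hs
    rw [hF, mlR]
    rw [show (fun k : ℕ => ((-lam) ^ k / Real.Gamma (α * k + 1)) *
        ((T - s) ^ (α - 1) * s ^ (α * k))) = fun k : ℕ =>
        (T - s) ^ (α - 1) * ((-lam * s ^ α) ^ k / Real.Gamma (α * k + 1)) from ?_]
    · rw [tsum_mul_left]
    · funext k
      have e1 : s ^ (α * k) = (s ^ α) ^ k := by
        rw [← Real.rpow_natCast (s ^ α), ← Real.rpow_mul hs0.le]
      rw [e1, mul_pow]
      ring
  calc ∫ s in (0:ℝ)..T, (T - s) ^ (α - 1) * mlR α (-lam * s ^ α)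
      = ∫ s in Set.Ioc (0:ℝ) T, (T - s) ^ (α - 1) * mlR α (-lam * s ^ α) :=
        intervalIntegral.integral_of_le hT.le
    _ = ∫ s, (∑' k, F k s) ∂μ := setIntegral_congr_fun measurableSet_Ioc hpt
    _ = ∑' k, ∫ s, F k s ∂μ := hswap.symm
    _ = Real.Gamma α / lam * (1 - mlR α (-lam * T ^ α)) := by
        rw [tsum_congr hval]
        have hsummml := ABCaux.summable_ml hα hα1 (-lam * T ^ α)
        have hzero := Summable.tsum_eq_zero_add hsummml
        simp only [pow_zero, Nat.cast_zero, mul_zero, zero_add, Real.Gamma_one] at hzero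
        have e2 : ∀ k : ℕ, Real.Gamma α * ((-lam) ^ k * T ^ (α * (k+1))) /
            Real.Gamma (α * (k+1) + 1) = (-(Real.Gamma α / lam)) *
            ((-lam * T ^ α) ^ (k+1) / Real.Gamma (α * (k+1) + 1)) := by
          intro k
          have e1' : (-lam * T ^ α) ^ (k+1) = (-lam) ^ (k+1) * T ^ (α * (k+1)) := by
            rw [mul_pow, ← Real.rpow_natCast (T ^ α) (k+1), ← Real.rpow_mul hT.le]
            push_cast; ring_nf
          rw [e1', pow_succ]
          field_simp
        rw [tsum_congr e2, tsum_mul_left]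
        have e3 : ∑' k : ℕ, (-lam * T ^ α) ^ (k+1) / Real.Gamma (α * (k+1) + 1)
            = mlR α (-lam * T ^ α) - 1 := by
          have h0 : mlR α (-lam * T ^ α)
              = 1 + ∑' k : ℕ, (-lam * T ^ α) ^ (k+1) / Real.Gamma (α * (k+1) + 1) := by
            rw [mlR, Summable.tsum_eq_zero_add hsummml]
            congr 1
            · simp
            · exact tsum_congr fun k => by push_cast; ring_nf
          linarith
        rw [e3]
        ring

lemma ABCaux.fubini_step (hα : 0 < α) (hα1 : α < 1) {lam t : ℝ} (hlam : 0 < lam) (ht : 0 < t)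
    {g : ℝ → ℝ} (hgm : StronglyMeasurable g) (hgint : IntegrableOn g (Set.Ioc 0 t)) :
    (∫ τ in Set.Ioc (0:ℝ) t, (t - τ) ^ (α - 1) *
        ∫ u in Set.Ioc (0:ℝ) τ, mlR α (-lam * (τ - u) ^ α) * g u)
      = Real.Gamma α / lam *
        ∫ u in Set.Ioc (0:ℝ) t, (1 - mlR α (-lam * (t - u) ^ α)) * g u := by
  set K : ℝ → ℝ := fun s => mlR α (-lam * s ^ α) with hK
  have hKc : Continuous K :=
    (ABCaux.mlR_continuous hα hα1).comp (continuous_const.mul (Real.continuous_rpow_const hα.le))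
  set M : ℝ := mlR α (lam * t ^ α) with hM
  have hKb : ∀ s : ℝ, |s| ≤ t → |K s| ≤ M := by
    intro s hs
    refine le_trans (ABCaux.mlR_abs_le hα hα1 _) ?_
    apply ABCaux.mlR_mono hα hα1 (abs_nonneg _)
    rw [abs_mul, abs_neg, abs_of_pos hlam]
    have h2 : |s ^ α| ≤ |s| ^ α := Real.abs_rpow_le_abs_rpow s α
    have h3 : |s| ^ α ≤ t ^ α := Real.rpow_le_rpow (abs_nonneg s) hs hα.le
    have := hlam.le
    nlinarith
  have hM0 : 0 ≤ M := le_trans (abs_nonneg _) (by simpa using hKb 0 (by simp [ht.le]))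
  set μt := volume.restrict (Set.Ioc (0:ℝ) t) with hμt
  have hrpm : Measurable (fun x : ℝ => x ^ (α - 1)) :=
    measurable_of_continuousOn_compl_singleton 0
      (fun x hx => (Real.continuousAt_rpow_const x (α-1) (Or.inl hx)).continuousWithinAt)
  set P : ℝ × ℝ → ℝ :=
    fun p => if p.2 < p.1 then (t - p.1) ^ (α - 1) * (K (p.1 - p.2) * g p.2) else 0 with hP
  have hPm : StronglyMeasurable P := by
    apply Measurable.stronglyMeasurable
    refine Measurable.ite (measurableSet_lt measurable_snd measurable_fst) ?_ measurable_const
    exact (hrpm.comp (measurable_const.sub measurable_fst)).mul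
      ((hKc.measurable.comp (measurable_fst.sub measurable_snd)).mul
        (hgm.measurable.comp measurable_snd))
  have hgabs : ∀ u ∈ Set.Ioc (0:ℝ) t, ∀ τ ∈ Set.Ioc (0:ℝ) t, |K (τ - u)| ≤ M := by
    intro u hu τ hτ
    apply hKb
    rw [abs_le]
    constructor <;> [linarith [hu.2, hτ.1]; linarith [hu.1, hτ.2]]
  -- integrability of P
  have hPint : Integrable P (μt.prod μt) := by
    rw [integrable_prod_iff hPm.aestronglyMeasurable]
    constructor
    · filter_upwards [ae_restrict_mem measurableSet_Ioc] with τ hτ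
      have heq : (fun u => P (τ, u)) =
          Set.indicator (Set.Iio τ) (fun u => (t - τ) ^ (α - 1) * (K (τ - u) * g u)) := by
        funext u
        rw [Set.indicator_apply]
        simp only [hP, Set.mem_Iio]
      rw [heq]
      apply Integrable.indicator _ measurableSet_Iio
      apply Integrable.const_mul
      apply Integrable.bdd_mul (c := M) hgint
        ((hKc.comp (continuous_const.sub continuous_id)).aestronglyMeasurable)
      · filter_upwards [ae_restrict_mem measurableSet_Ioc] with u hu
        rw [Real.norm_eq_abs]
        exact hgabs u hu τ hτ
    · have hmaj : Integrable
          (fun τ => (t - τ) ^ (α - 1) * (M * ∫ u in Set.Ioc (0:ℝ) t, |g u|)) μt := by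
        have h1 : IntegrableOn (fun τ => (t - τ) ^ (α - 1) * τ ^ (0:ℝ)) (Set.Ioc 0 t) volume :=
          ABCaux.base_intable hα hα1 ht le_rfl
        have h2 : IntegrableOn (fun τ => (t - τ) ^ (α - 1)) (Set.Ioc 0 t) volume := by
          refine h1.congr_fun (fun τ _ => ?_) measurableSet_Ioc
          simp only [Real.rpow_zero, mul_one]
        exact h2.mul_const _
      apply Integrable.mono' hmaj (hPm.norm.integral_prod_right'.aestronglyMeasurable)
      filter_upwards [ae_restrict_mem measurableSet_Ioc] with τ hτ
      have hnn : 0 ≤ ∫ u, ‖P (τ, u)‖ ∂μt := integral_nonneg fun u => norm_nonneg _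
      rw [Real.norm_eq_abs, abs_of_nonneg hnn]
      have hrp : (0:ℝ) ≤ (t - τ) ^ (α - 1) := Real.rpow_nonneg (by linarith [hτ.2]) _
      calc ∫ u, ‖P (τ, u)‖ ∂μt
          ≤ ∫ u in Set.Ioc (0:ℝ) t, (t - τ) ^ (α - 1) * (M * |g u|) := by
            rw [hμt]
            refine integral_mono_of_nonneg (Filter.Eventually.of_forall fun u => norm_nonneg _)
              (((hgint.abs.const_mul M).const_mul _)) ?_
            filter_upwards [ae_restrict_mem measurableSet_Ioc] with u hu
            simp only [hP, Real.norm_eq_abs]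
            split_ifs with h
            · rw [abs_mul, abs_mul, abs_of_nonneg hrp]
              exact mul_le_mul_of_nonneg_left
                (mul_le_mul_of_nonneg_right (hgabs u hu τ hτ) (abs_nonneg _)) hrp
            · simpa using mul_nonneg hrp (mul_nonneg hM0 (abs_nonneg (g u)))
        _ = (t - τ) ^ (α - 1) * (M * ∫ u in Set.Ioc (0:ℝ) t, |g u|) := by
            rw [MeasureTheory.integral_const_mul, MeasureTheory.integral_const_mul]
  -- do the swap
  have hswap := MeasureTheory.integral_integral_swap
    (f := fun τ u => P (τ, u)) (μ := μt) (ν := μt) (by exact hPint)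
  -- identify LHS
  have hL : (∫ τ, ∫ u, P (τ, u) ∂μt ∂μt)
      = ∫ τ in Set.Ioc (0:ℝ) t, (t - τ) ^ (α - 1) *
          ∫ u in Set.Ioc (0:ℝ) τ, K (τ - u) * g u := by
    rw [hμt]
    refine setIntegral_congr_fun measurableSet_Ioc fun τ hτ => ?_
    have heq : (fun u => P (τ, u)) =
        Set.indicator (Set.Iio τ) (fun u => (t - τ) ^ (α - 1) * (K (τ - u) * g u)) := by
      funext u
      rw [Set.indicator_apply]
      simp only [hP, Set.mem_Iio]
    rw [heq, ← hμt, hμt, integral_indicator measurableSet_Iio,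
      Measure.restrict_restrict measurableSet_Iio]
    have hset : Set.Iio τ ∩ Set.Ioc 0 t = Set.Ioo 0 τ := by
      ext u
      simp only [Set.mem_inter_iff, Set.mem_Iio, Set.mem_Ioc, Set.mem_Ioo]
      constructor
      · rintro ⟨h1, h2, h3⟩; exact ⟨h2, h1⟩
      · rintro ⟨h1, h2⟩; exact ⟨h2, h1, by linarith [hτ.2]⟩
    rw [hset, ← integral_Ioc_eq_integral_Ioo, MeasureTheory.integral_const_mul]
  -- identify RHS
  have hR : (∫ u, ∫ τ, P (τ, u) ∂μt ∂μt)
      = ∫ u in Set.Ioc (0:ℝ) t, (Real.Gamma α / lam * (1 - K (t - u))) * g u := by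
    rw [hμt, integral_Ioc_eq_integral_Ioo,
      integral_Ioc_eq_integral_Ioo (f := fun u => Real.Gamma α / lam * (1 - K (t - u)) * g u)]
    refine setIntegral_congr_fun measurableSet_Ioo fun u hu => ?_
    have heq : (fun τ => P (τ, u)) =
        Set.indicator (Set.Ioi u) (fun τ => ((t - τ) ^ (α - 1) * K (τ - u)) * g u) := by
      funext τ
      rw [Set.indicator_apply]
      simp only [hP, Set.mem_Ioi]
      split_ifs <;> ring_nf
    rw [heq, integral_indicator measurableSet_Ioi,
      Measure.restrict_restrict measurableSet_Ioi]
    have hset : Set.Ioi u ∩ Set.Ioc 0 t = Set.Ioc u t := by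
      ext τ
      simp only [Set.mem_inter_iff, Set.mem_Ioi, Set.mem_Ioc]
      constructor
      · rintro ⟨h1, _, h3⟩; exact ⟨h1, h3⟩
      · rintro ⟨h1, h2⟩; exact ⟨h1, by linarith [hu.1], h2⟩
    rw [hset, MeasureTheory.integral_mul_const]
    congr 1
    have hinner : (∫ τ in Set.Ioc u t, (t - τ) ^ (α - 1) * K (τ - u))
        = Real.Gamma α / lam * (1 - K (t - u)) := by
      have h1 : (∫ τ in Set.Ioc u t, (t - τ) ^ (α - 1) * K (τ - u))
          = ∫ τ in u..t, (t - τ) ^ (α - 1) * K (τ - u) :=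
        (intervalIntegral.integral_of_le hu.2.le).symm
      have h2 : (∫ τ in u..t, (t - τ) ^ (α - 1) * K (τ - u))
          = ∫ s in (0:ℝ)..(t - u), ((t - u) - s) ^ (α - 1) * K s := by
        have := intervalIntegral.integral_comp_sub_right
          (a := u) (b := t) (fun s => ((t - u) - s) ^ (α - 1) * K s) u
        simp only [sub_self] at this
        rw [← this]
        refine intervalIntegral.integral_congr fun τ _ => ?_
        have : t - u - (τ - u) = t - τ := by ring
        rw [this]
      rw [h1, h2, hK]
      have := ABCaux.ml_int hα hα1 hlam (show 0 < t - u by linarith [hu.2])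
      simpa using this
    rw [hinner]
  rw [hL, hR] at hswap
  rw [hK] at hswap
  rw [hswap, ← MeasureTheory.integral_const_mul]
  refine setIntegral_congr_fun measurableSet_Ioc fun u hu => ?_
  ring

end Aux

/-- If `y` is absolutely continuous on `(0,∞)` and satisfies `^{ABC}D^α_{0+} y(t) = F(t)` with
`F` continuous and `F(0⁺) = 0`, then `y` satisfies the fractional integral equation
`y(t) = y(0⁺) + ((1−α)/B(α)) F(t) + (α/B(α)) J^α_{0+} F(t)`. -/
theorem ABC_equation_to_integral_equation (α B y0 : ℝ) (y y' F : ℝ → ℝ)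
    (hα : 0 < α) (hα1 : α < 1) (hB : 0 < B)
    (hy' : ∀ t > (0 : ℝ), IntervalIntegrable y' volume 0 t)
    (hy : ∀ t > (0 : ℝ), y t = y0 + ∫ τ in (0 : ℝ)..t, y' τ)
    (hF : Continuous F) (hF0 : F 0 = 0)
    (heq : ∀ t > (0 : ℝ), ABCop B α y' t = F t) :
    ∀ t > (0 : ℝ),
      y t = y0 + ((1 - α) / B) * F t + (α / B) * RLr α F t := by
  intro t ht
  have h1α : (0:ℝ) < 1 - α := by linarith
  set lam := α / (1 - α) with hlam_def
  have hlam : 0 < lam := div_pos hα h1α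
  have hKc : Continuous (fun s : ℝ => mlR α (-lam * s ^ α)) :=
    (ABCaux.mlR_continuous hα hα1).comp (continuous_const.mul (Real.continuous_rpow_const hα.le))
  set M : ℝ := mlR α (lam * t ^ α) with hM
  have hKb : ∀ s : ℝ, |s| ≤ t → |mlR α (-lam * s ^ α)| ≤ M := by
    intro s hs
    refine le_trans (ABCaux.mlR_abs_le hα hα1 _) ?_
    apply ABCaux.mlR_mono hα hα1 (abs_nonneg _)
    rw [abs_mul, abs_neg, abs_of_pos hlam]
    have h2 : |s ^ α| ≤ |s| ^ α := Real.abs_rpow_le_abs_rpow s α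
    have h3 : |s| ^ α ≤ t ^ α := Real.rpow_le_rpow (abs_nonneg s) hs hα.le
    have := hlam.le
    nlinarith
  have hyint : IntegrableOn y' (Set.Ioc 0 t) volume :=
    (intervalIntegrable_iff_integrableOn_Ioc_of_le ht.le).mp (hy' t ht)
  have hsm := hyint.aestronglyMeasurable
  set g := hsm.mk y' with hg
  have hgm : StronglyMeasurable g := hsm.stronglyMeasurable_mk
  have hgae : y' =ᵐ[volume.restrict (Set.Ioc 0 t)] g := hsm.ae_eq_mk
  have hgint : IntegrableOn g (Set.Ioc 0 t) volume := hyint.congr hgae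
  have hFτ : ∀ τ ∈ Set.Ioc (0:ℝ) t,
      F τ = (B / (1 - α)) * ∫ u in Set.Ioc (0:ℝ) τ, mlR α (-lam * (τ - u) ^ α) * g u := by
    intro τ hτ
    rw [← heq τ hτ.1, ABCop]
    congr 1
    rw [intervalIntegral.integral_of_le hτ.1.le]
    have hae' : y' =ᵐ[volume.restrict (Set.Ioc 0 τ)] g :=
      ae_restrict_of_ae_restrict_of_subset (Set.Ioc_subset_Ioc_right hτ.2) hgae
    refine integral_congr_ae (hae'.mono fun u hu => ?_)
    dsimp only
    rw [hu, hlam_def]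
  have hterm1 : (1 - α) / B * F t
      = ∫ u in Set.Ioc (0:ℝ) t, mlR α (-lam * (t - u) ^ α) * g u := by
    rw [hFτ t ⟨ht, le_refl t⟩]
    field_simp
  have hD := ABCaux.fubini_step hα hα1 hlam ht hgm hgint
  have hΓ : Real.Gamma α ≠ 0 := (Real.Gamma_pos_of_pos hα).ne'
  have hterm2 : α / B * RLr α F t
      = ∫ u in Set.Ioc (0:ℝ) t, (1 - mlR α (-lam * (t - u) ^ α)) * g u := by
    calc α / B * RLr α F t
        = α / B * ((Real.Gamma α)⁻¹ * ∫ τ in Set.Ioc (0:ℝ) t, (t - τ) ^ (α - 1) * F τ) := by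
          rw [RLr, intervalIntegral.integral_of_le ht.le]
      _ = α / B * ((Real.Gamma α)⁻¹ * ((B / (1 - α)) * ∫ τ in Set.Ioc (0:ℝ) t,
            (t - τ) ^ (α - 1) *
              ∫ u in Set.Ioc (0:ℝ) τ, mlR α (-lam * (τ - u) ^ α) * g u)) := by
          have hDF : (∫ τ in Set.Ioc (0:ℝ) t, (t - τ) ^ (α - 1) * F τ)
              = (B / (1 - α)) * ∫ τ in Set.Ioc (0:ℝ) t, (t - τ) ^ (α - 1) *
                ∫ u in Set.Ioc (0:ℝ) τ, mlR α (-lam * (τ - u) ^ α) * g u := by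
            rw [← MeasureTheory.integral_const_mul]
            refine setIntegral_congr_fun measurableSet_Ioc fun τ hτ => ?_
            rw [hFτ τ hτ]
            ring
          rw [hDF]
      _ = α / B * ((Real.Gamma α)⁻¹ * ((B / (1 - α)) * (Real.Gamma α / lam *
            ∫ u in Set.Ioc (0:ℝ) t, (1 - mlR α (-lam * (t - u) ^ α)) * g u))) := by
          rw [hD]
      _ = ∫ u in Set.Ioc (0:ℝ) t, (1 - mlR α (-lam * (t - u) ^ α)) * g u := by
          rw [hlam_def]
          field_simp
  have hint1 : Integrable (fun u => mlR α (-lam * (t - u) ^ α) * g u)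
      (volume.restrict (Set.Ioc 0 t)) := by
    apply Integrable.bdd_mul (c := M) hgint
      ((hKc.comp (continuous_const.sub continuous_id)).aestronglyMeasurable)
    filter_upwards [ae_restrict_mem measurableSet_Ioc] with u hu
    rw [Real.norm_eq_abs]
    exact hKb (t - u) (by rw [abs_le]; constructor <;> [linarith [hu.2]; linarith [hu.1]])
  have hint2 : Integrable (fun u => (1 - mlR α (-lam * (t - u) ^ α)) * g u)
      (volume.restrict (Set.Ioc 0 t)) := by
    have hc2 : Continuous (fun u : ℝ => 1 - mlR α (-lam * (t - u) ^ α)) :=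
      continuous_const.sub (hKc.comp (continuous_const.sub continuous_id))
    apply Integrable.bdd_mul (c := 1 + M) hgint hc2.aestronglyMeasurable
    filter_upwards [ae_restrict_mem measurableSet_Ioc] with u hu
    rw [Real.norm_eq_abs]
    have := hKb (t - u) (by rw [abs_le]; constructor <;> [linarith [hu.2]; linarith [hu.1]])
    rw [abs_le] at this ⊢
    constructor <;> [linarith [this.2]; linarith [this.1]]
  have hsum : ∫ u in Set.Ioc (0:ℝ) t, g u
      = (∫ u in Set.Ioc (0:ℝ) t, mlR α (-lam * (t - u) ^ α) * g u)
        + ∫ u in Set.Ioc (0:ℝ) t, (1 - mlR α (-lam * (t - u) ^ α)) * g u := by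
    rw [← integral_add hint1 hint2]
    refine setIntegral_congr_fun measurableSet_Ioc fun u hu => ?_
    ring
  calc y t = y0 + ∫ τ in (0:ℝ)..t, y' τ := hy t ht
    _ = y0 + ∫ u in Set.Ioc (0:ℝ) t, g u := by
        rw [intervalIntegral.integral_of_le ht.le]
        congr 1
        exact integral_congr_ae hgae
    _ = y0 + ((1 - α) / B * F t + α / B * RLr α F t) := by rw [hsum, hterm1, hterm2]
    _ = y0 + (1 - α) / B * F t + α / B * RLr α F t := by ring
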